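/- Let K and T be positive integers, δ ∈ (0,1], and let w ≥ (4/δ²)·(√(log(2KT²)) + √(log(2T)))² be an even integer, with threshold b = √((w/2)·log(2KT²)). Let μ, μ′ ∈ [0,1] with |μ′ − μ| ≥ δ, and let X₁, …, X_w be independent random variables taking values in [0,1] such that X₁, …, X_{w/2} each have mean μ and X_{w/2+1}, …, X_w each have mean μ′. Define S = Σ_{ℓ=w/2+1}^{w} X_ℓ − Σ_{ℓ=1}^{w/2} X_ℓ. Then P(|S| > b) ≥ 1 − 1/T. -/

import Mathlib

open MeasureTheory ProbabilityTheory

lemma my_integrable_of_bound {Ω : Type*} [MeasurableSpace Ω] (P : Measure Ω)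
    [IsFiniteMeasure P] {f : Ω → ℝ} (hm : AEStronglyMeasurable f P) (C : ℝ)
    (h : ∀ᵐ ω ∂P, |f ω| ≤ C) : Integrable f P :=
  (integrable_const C).mono' hm (by simpa [Real.norm_eq_abs] using h)

/-- Pointwise quadratic bound on `exp` near zero. -/
lemma my_exp_quad {x : ℝ} (hx : |x| ≤ 1) : Real.exp x ≤ 1 + x + (3/4) * x ^ 2 := by
  have h := Real.exp_bound hx (n := 2) (by norm_num)
  have hsum : ∑ m ∈ Finset.range 2, x ^ m / m.factorial = 1 + x := by
    simp [Finset.sum_range_succ]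
  rw [hsum] at h
  have h' : |Real.exp x - (1 + x)| ≤ x ^ 2 * (3 / 4) := by
    convert h using 2
    · rw [sq_abs]
    · norm_num [Nat.factorial]
  have := abs_le.mp h'
  linarith [this.2]

/-- mgf bound for a centered bounded random variable with variance at most 1/4. -/
lemma my_mgf_bound {Ω : Type*} [MeasurableSpace Ω] (P : Measure Ω) [IsProbabilityMeasure P]
    (Z : Ω → ℝ) (hZm : Measurable Z) (hZb : ∀ᵐ ω ∂P, |Z ω| ≤ 1)
    (hmean : ∫ ω, Z ω ∂P = 0) (hvar : ∫ ω, (Z ω) ^ 2 ∂P ≤ 1/4)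
    {t : ℝ} (ht0 : 0 ≤ t) (ht1 : t ≤ 1) :
    mgf Z P t ≤ Real.exp (3/16 * t ^ 2) := by
  have hZint : Integrable Z P :=
    my_integrable_of_bound P hZm.aestronglyMeasurable 1 hZb
  have hZ2int : Integrable (fun ω => (Z ω) ^ 2) P := by
    refine my_integrable_of_bound P ((hZm.pow_const 2).aestronglyMeasurable) 1 ?_
    filter_upwards [hZb] with ω hω
    have : |Z ω| ^ 2 ≤ 1 := by nlinarith [abs_nonneg (Z ω)]
    calc |(Z ω) ^ 2| = |Z ω| ^ 2 := by rw [abs_pow]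
    _ ≤ 1 := this
  have hexpint : Integrable (fun ω => Real.exp (t * Z ω)) P := by
    refine my_integrable_of_bound P ((hZm.const_mul t).exp.aestronglyMeasurable)
      (Real.exp 1) ?_
    filter_upwards [hZb] with ω hω
    rw [abs_of_pos (Real.exp_pos _)]
    apply Real.exp_le_exp.mpr
    calc t * Z ω ≤ |t * Z ω| := le_abs_self _
    _ = t * |Z ω| := by rw [abs_mul, abs_of_nonneg ht0]
    _ ≤ 1 * 1 := by
        exact mul_le_mul ht1 hω (abs_nonneg _) (by norm_num)
    _ = 1 := by norm_num
  have hRHSint : Integrable (fun ω => 1 + t * Z ω + (3/4) * t ^ 2 * (Z ω) ^ 2) P := by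
    exact ((integrable_const 1).add (hZint.const_mul t)).add (hZ2int.const_mul _)
  have hpt : ∀ᵐ ω ∂P, Real.exp (t * Z ω) ≤ 1 + t * Z ω + (3/4) * t ^ 2 * (Z ω) ^ 2 := by
    filter_upwards [hZb] with ω hω
    have hx : |t * Z ω| ≤ 1 := by
      rw [abs_mul, abs_of_nonneg ht0]
      calc t * |Z ω| ≤ 1 * 1 := mul_le_mul ht1 hω (abs_nonneg _) (by norm_num)
      _ = 1 := by norm_num
    have := my_exp_quad hx
    calc Real.exp (t * Z ω) ≤ 1 + t * Z ω + (3/4) * (t * Z ω) ^ 2 := this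
    _ = 1 + t * Z ω + (3/4) * t ^ 2 * (Z ω) ^ 2 := by ring
  have iA : Integrable (fun ω => 1 + t * Z ω) P :=
    (integrable_const 1).add (hZint.const_mul t)
  have iB : Integrable (fun ω => (3/4) * t ^ 2 * (Z ω) ^ 2) P := hZ2int.const_mul _
  have iC : Integrable (fun _ : Ω => (1 : ℝ)) P := integrable_const 1
  have iD : Integrable (fun ω => t * Z ω) P := hZint.const_mul t
  have hint_eq : ∫ ω, (1 + t * Z ω + (3/4) * t ^ 2 * (Z ω) ^ 2) ∂P
      = 1 + t * (∫ ω, Z ω ∂P) + (3/4) * t ^ 2 * ∫ ω, (Z ω) ^ 2 ∂P := by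
    rw [integral_add iA iB, integral_add iC iD,
      integral_const, integral_const_mul, integral_const_mul]
    simp
  calc mgf Z P t = ∫ ω, Real.exp (t * Z ω) ∂P := rfl
  _ ≤ ∫ ω, (1 + t * Z ω + (3/4) * t ^ 2 * (Z ω) ^ 2) ∂P :=
      integral_mono_ae hexpint hRHSint hpt
  _ = 1 + t * (∫ ω, Z ω ∂P) + (3/4) * t ^ 2 * ∫ ω, (Z ω) ^ 2 ∂P := hint_eq
  _ ≤ 1 + (3/16) * t ^ 2 := by
      rw [hmean]
      nlinarith [sq_nonneg t]
  _ ≤ Real.exp (3/16 * t ^ 2) := by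
      have := Real.add_one_le_exp (3/16 * t ^ 2)
      linarith

lemma aux_two_mul_ge_one {a k : ℝ} (ha : 1 ≤ a) (hk : 1 ≤ k) : 1 ≤ 2 * k * a ^ 2 := by
  nlinarith

lemma aux_sq_le {x y : ℝ} (h0 : 0 ≤ x) (h : x ≤ y) : x ^ 2 ≤ y ^ 2 := by nlinarith

lemma aux_eps {r s2 A C δ : ℝ} (hr : 0 < r) (hA : 0 ≤ A) (hC : 0 ≤ C) (hs2 : 1 ≤ s2)
    (h : s2 * (A + C) ≤ r * δ) :
    r * (s2 * C) ≤ r ^ 2 * δ - r * A := by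
  nlinarith [mul_le_mul_of_nonneg_left h hr.le, mul_nonneg hr.le hA,
    mul_nonneg hr.le (mul_nonneg hA (by linarith : (0:ℝ) ≤ s2 - 1))]

lemma aux_eps_le {N δ bb : ℝ} (hN : 0 < N) (hδ : δ ≤ 1) (hbb : 0 ≤ bb) :
    N * δ - bb ≤ N := by nlinarith

lemma aux_var {v c : ℝ} (hv : v ≤ c) (h0 : 0 ≤ c) (h1 : c ≤ 1) :
    v - 2 * c * c + c ^ 2 ≤ 1 / 4 := by nlinarith [sq_nonneg (2 * c - 1)]

lemma aux_exponent {e N L2 LT : ℝ} (hN : 0 < N) (h : 2 * N * (L2 + LT) ≤ e)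
    (h2 : 0 < L2) (hLT : 0 ≤ LT) : N * LT ≤ 5 / 8 * e := by nlinarith

lemma aux_sq_rev {x y : ℝ} (h0 : 0 ≤ x) (h1 : 0 ≤ y) (h : x ^ 2 ≤ y ^ 2) : x ≤ y := by
  nlinarith

set_option maxHeartbeats 3200000 in
/-- Successful-detection lemma for M-UCB: with `δ ∈ (0,1]`, even window size
`w ≥ (4/δ²)(√log(2KT²) + √log(2T))²`, threshold `b = √((w/2)log(2KT²))`, and a window whose
first half has mean `μ` and second half has mean `μ′` with `|μ′ − μ| ≥ δ`, the detector fires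
with probability at least `1 − 1/T`. -/
theorem mucb_successful_detection
    {Ω : Type*} [MeasurableSpace Ω] (P : Measure Ω) [IsProbabilityMeasure P]
    (K T : ℕ) (hK : 0 < K) (hT : 0 < T)
    (δ : ℝ) (hδ : δ ∈ Set.Ioc (0 : ℝ) 1)
    (w : ℕ) (hweven : Even w)
    (hwlarge : (4 / δ ^ 2) *
      (Real.sqrt (Real.log (2 * K * T ^ 2)) + Real.sqrt (Real.log (2 * T))) ^ 2 ≤ (w : ℝ))
    (b : ℝ) (hb : b = Real.sqrt (((w : ℝ) / 2) * Real.log (2 * K * T ^ 2)))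
    (μ μ' : ℝ) (hμ : μ ∈ Set.Icc (0 : ℝ) 1) (hμ' : μ' ∈ Set.Icc (0 : ℝ) 1)
    (hgap : δ ≤ |μ' - μ|)
    (X : ℕ → Ω → ℝ)
    (hmeas : ∀ i ∈ Finset.Icc 1 w, Measurable (X i))
    (hrange : ∀ i ∈ Finset.Icc 1 w, ∀ᵐ ω ∂P, X i ω ∈ Set.Icc (0 : ℝ) 1)
    (hmean1 : ∀ i ∈ Finset.Icc 1 (w / 2), ∫ ω, X i ω ∂P = μ)
    (hmean2 : ∀ i ∈ Finset.Icc (w / 2 + 1) w, ∫ ω, X i ω ∂P = μ')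
    (hindep : iIndepFun
      (fun i : {x // x ∈ Finset.Icc 1 w} => X i.1) P) :
    ENNReal.ofReal (1 - 1 / (T : ℝ))
      ≤ P {ω | b < |(∑ ℓ ∈ Finset.Icc (w / 2 + 1) w, X ℓ ω)
          - ∑ ℓ ∈ Finset.Icc 1 (w / 2), X ℓ ω|} := by
  classical
  obtain ⟨hδ0, hδ1⟩ := hδ
  set n : ℕ := w / 2 with hn
  set AA : ℝ := Real.sqrt (Real.log (2 * K * T ^ 2)) with hAA
  set CC : ℝ := Real.sqrt (Real.log (2 * T)) with hCC
  have hT1 : (1 : ℝ) ≤ (T : ℝ) := by exact_mod_cast hT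
  have hK1 : (1 : ℝ) ≤ (K : ℝ) := by exact_mod_cast hK
  -- basic log facts
  have hlog2T_pos : 0 < Real.log (2 * T) := Real.log_pos (by linarith)
  have hCpos : 0 < CC := Real.sqrt_pos.mpr hlog2T_pos
  have hC2 : CC ^ 2 = Real.log (2 * T) := Real.sq_sqrt hlog2T_pos.le
  have hlogKT_nonneg : 0 ≤ Real.log (2 * K * T ^ 2) := Real.log_nonneg (aux_two_mul_ge_one hT1 hK1)
  have hA2 : AA ^ 2 = Real.log (2 * K * T ^ 2) := Real.sq_sqrt hlogKT_nonneg
  have hA0 : 0 ≤ AA := Real.sqrt_nonneg _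
  -- w is positive
  have hwpos : 0 < (w : ℝ) := by
    refine lt_of_lt_of_le ?_ hwlarge
    have : 0 < AA + CC := by linarith
    positivity
  obtain ⟨k, hk⟩ := hweven
  have hnk : n = k := by omega
  have hwn : w = n + n := by omega
  have hwN : (w : ℝ) = 2 * (n : ℝ) := by rw [hwn]; push_cast; ring
  have hNpos : 0 < (n : ℝ) := by linarith [hwN, hwpos]
  set N : ℝ := (n : ℝ) with hNdef
  set r : ℝ := Real.sqrt N with hrdef
  have hr2 : r ^ 2 = N := Real.sq_sqrt hNpos.le
  have hrpos : 0 < r := Real.sqrt_pos.mpr hNpos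
  -- b = r * AA
  have hbval : b = r * AA := by
    rw [hb]
    have : (w : ℝ) / 2 = N := by rw [hwN]; ring
    rw [this, ← hA2, Real.sqrt_mul hNpos.le, Real.sqrt_sq hA0]
  have hb0 : 0 ≤ b := by rw [hbval]; positivity
  have h4 : 4 * (AA + CC) ^ 2 ≤ (w : ℝ) * δ ^ 2 := by
    have hδ2 : 0 < δ ^ 2 := by positivity
    rw [div_mul_eq_mul_div, div_le_iff₀ hδ2] at hwlarge
    linarith [hwlarge]
  have hs2 : (Real.sqrt 2) ^ 2 = 2 := Real.sq_sqrt (by norm_num)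
  have hs2pos : 0 < Real.sqrt 2 := Real.sqrt_pos.mpr (by norm_num)
  have hs2ge1 : 1 ≤ Real.sqrt 2 := by
    have h := Real.sqrt_le_sqrt (show (1:ℝ) ≤ 2 by norm_num)
    rwa [Real.sqrt_one] at h
  have hrδ : Real.sqrt 2 * (AA + CC) ≤ r * δ := by
    refine aux_sq_rev (by positivity) (by positivity) ?_
    rw [mul_pow, mul_pow, hs2, hr2]
    rw [hwN] at h4
    have hAC2 : 0 ≤ (AA + CC) ^ 2 := sq_nonneg _
    linarith [h4]
  set ε : ℝ := N * δ - b with hεdef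
  have hεlb : r * (Real.sqrt 2 * CC) ≤ ε := by
    rw [hεdef, hbval]
    have h := aux_eps hrpos hA0 hCpos.le hs2ge1 hrδ
    rwa [hr2] at h
  have hε0 : 0 ≤ ε := le_trans (by positivity) hεlb
  have hε2 : 2 * N * CC ^ 2 ≤ ε ^ 2 := by
    have h1 : (r * (Real.sqrt 2 * CC)) ^ 2 ≤ ε ^ 2 :=
      aux_sq_le (by positivity) hεlb
    have h2 : (r * (Real.sqrt 2 * CC)) ^ 2 = 2 * N * CC ^ 2 := by
      rw [mul_pow, mul_pow, hs2, hr2]; ring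
    linarith [h1, h2]
  have hεle : ε ≤ N := by
    rw [hεdef]; exact aux_eps_le hNpos hδ1 hb0
  set t : ℝ := ε / N with htdef
  have ht0 : 0 ≤ t := div_nonneg hε0 hNpos.le
  have ht1 : t ≤ 1 := by rw [htdef, div_le_one hNpos]; exact hεle
  -- sign
  set s : ℝ := if μ ≤ μ' then 1 else -1 with hsdef
  have hs_abs : |s| = 1 := by
    rw [hsdef]; split <;> simp
  have hs_mul : s * (μ' - μ) = |μ' - μ| := by
    rw [hsdef]; split_ifs with h
    · rw [abs_of_nonneg (by linarith)]; ring
    · rw [abs_of_neg (by linarith)]; ring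
  -- centered variables
  set eps : ℕ → ℝ := fun i => if i ≤ n then s else -s with hepsdef
  set cc : ℕ → ℝ := fun i => if i ≤ n then μ else μ' with hccdef
  set Z : ℕ → Ω → ℝ := fun i ω => eps i * (X i ω - cc i) with hZdef
  have heps_abs : ∀ i, |eps i| = 1 := by
    intro i; rw [hepsdef]; dsimp only; split <;> simp [hs_abs]
  have hcc_mem : ∀ i, cc i ∈ Set.Icc (0:ℝ) 1 := by
    intro i; rw [hccdef]; dsimp only; split
    · exact hμ
    · exact hμ'
  have hcc_mean : ∀ i ∈ Finset.Icc 1 w, ∫ ω, X i ω ∂P = cc i := by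
    intro i hi
    rw [hccdef]; dsimp only; split_ifs with h
    · exact hmean1 i (Finset.mem_Icc.mpr ⟨(Finset.mem_Icc.mp hi).1, h⟩)
    · exact hmean2 i (Finset.mem_Icc.mpr ⟨by omega, (Finset.mem_Icc.mp hi).2⟩)
  -- properties of Z
  have hZmeas : ∀ i ∈ Finset.Icc 1 w, Measurable (Z i) := by
    intro i hi
    exact ((hmeas i hi).sub measurable_const).const_mul _
  have hXint : ∀ i ∈ Finset.Icc 1 w, Integrable (X i) P := by
    intro i hi
    refine my_integrable_of_bound P (hmeas i hi).aestronglyMeasurable 1 ?_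
    filter_upwards [hrange i hi] with ω hω
    rw [abs_le]; exact ⟨by linarith [hω.1], hω.2⟩
  have hZbound : ∀ i ∈ Finset.Icc 1 w, ∀ᵐ ω ∂P, |Z i ω| ≤ 1 := by
    intro i hi
    filter_upwards [hrange i hi] with ω hω
    rw [hZdef]; dsimp only
    rw [abs_mul, heps_abs i, one_mul, abs_le]
    have h1 := (hcc_mem i).1; have h2 := (hcc_mem i).2
    constructor
    · linarith [hω.1]
    · linarith [hω.2]
  have hZmean : ∀ i ∈ Finset.Icc 1 w, ∫ ω, Z i ω ∂P = 0 := by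
    intro i hi
    rw [hZdef]; dsimp only
    rw [integral_const_mul, integral_sub (hXint i hi) (integrable_const _),
      integral_const, hcc_mean i hi]
    simp
  have hZvar : ∀ i ∈ Finset.Icc 1 w, ∫ ω, (Z i ω) ^ 2 ∂P ≤ 1/4 := by
    intro i hi
    have heps2 : eps i ^ 2 = 1 := by
      rw [← sq_abs, heps_abs i]; norm_num
    have hform : (fun ω => (Z i ω) ^ 2)
        = fun ω => (X i ω) ^ 2 - (2 * cc i) * X i ω + (cc i) ^ 2 := by
      funext ω; rw [hZdef]; dsimp only
      calc (eps i * (X i ω - cc i)) ^ 2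
          = eps i ^ 2 * (X i ω - cc i) ^ 2 := by ring
        _ = (X i ω) ^ 2 - (2 * cc i) * X i ω + (cc i) ^ 2 := by rw [heps2]; ring
    have hX2int : Integrable (fun ω => (X i ω) ^ 2) P := by
      refine my_integrable_of_bound P (((hmeas i hi).pow_const 2).aestronglyMeasurable) 1 ?_
      filter_upwards [hrange i hi] with ω hω
      calc |(X i ω) ^ 2| = |X i ω| ^ 2 := abs_pow _ _
        _ ≤ 1 ^ 2 := by
            gcongr
            exact abs_le.mpr ⟨by linarith [hω.1], hω.2⟩
        _ = 1 := one_pow 2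
    have hX2le : ∫ ω, (X i ω) ^ 2 ∂P ≤ ∫ ω, X i ω ∂P := by
      refine integral_mono_ae hX2int (hXint i hi) ?_
      filter_upwards [hrange i hi] with ω hω
      calc (X i ω) ^ 2 = X i ω * X i ω := sq (X i ω) ▸ (sq (X i ω)).symm ▸ (by ring)
        _ ≤ 1 * X i ω := mul_le_mul_of_nonneg_right hω.2 hω.1
        _ = X i ω := one_mul _
    have iE : Integrable (fun ω => (X i ω) ^ 2 - (2 * cc i) * X i ω) P :=
      hX2int.sub ((hXint i hi).const_mul _)
    have iF : Integrable (fun ω => (2 * cc i) * X i ω) P := (hXint i hi).const_mul _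
    rw [hform, integral_add iE (integrable_const _),
      integral_sub hX2int iF, integral_const_mul,
      integral_const, hcc_mean i hi]
    simp only [measure_univ, ENNReal.toReal_one, smul_eq_mul, one_mul, probReal_univ]
    rw [hcc_mean i hi] at hX2le
    exact aux_var hX2le (hcc_mem i).1 (hcc_mem i).2
  -- the detector statistic and the sum
  set D : Ω → ℝ := fun ω => (∑ ℓ ∈ Finset.Icc (n + 1) w, X ℓ ω)
      - ∑ ℓ ∈ Finset.Icc 1 n, X ℓ ω with hDdef
  set Y : Ω → ℝ := fun ω => ∑ i ∈ Finset.Icc 1 w, Z i ω with hYdef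
  have hunion : Finset.Icc 1 w = Finset.Icc 1 n ∪ Finset.Icc (n + 1) w := by
    ext j; simp only [Finset.mem_Icc, Finset.mem_union]; omega
  have hdisj : Disjoint (Finset.Icc 1 n) (Finset.Icc (n + 1) w) := by
    rw [Finset.disjoint_left]
    intro j h1 h2
    simp only [Finset.mem_Icc] at h1 h2; omega
  have hYeq : ∀ ω, Y ω = s * (N * (μ' - μ)) - s * D ω := by
    intro ω
    rw [hYdef]; dsimp only
    rw [hunion, Finset.sum_union hdisj]
    have hsum1 : ∑ i ∈ Finset.Icc 1 n, Z i ω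
        = s * ((∑ i ∈ Finset.Icc 1 n, X i ω) - N * μ) := by
      have : ∀ i ∈ Finset.Icc 1 n, Z i ω = s * (X i ω - μ) := by
        intro i hi
        have hile : i ≤ n := (Finset.mem_Icc.mp hi).2
        rw [hZdef, hepsdef, hccdef]; dsimp only
        rw [if_pos hile, if_pos hile]
      rw [Finset.sum_congr rfl this, ← Finset.mul_sum, Finset.sum_sub_distrib,
        Finset.sum_const, Nat.card_Icc]
      simp only [Nat.add_sub_cancel, nsmul_eq_mul]
      rfl
    have hsum2 : ∑ i ∈ Finset.Icc (n + 1) w, Z i ω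
        = s * (N * μ' - ∑ i ∈ Finset.Icc (n + 1) w, X i ω) := by
      have : ∀ i ∈ Finset.Icc (n + 1) w, Z i ω = -s * (X i ω - μ') := by
        intro i hi
        have hile : ¬ (i ≤ n) := by
          have := (Finset.mem_Icc.mp hi).1; omega
        rw [hZdef, hepsdef, hccdef]; dsimp only
        rw [if_neg hile, if_neg hile]
      rw [Finset.sum_congr rfl this, ← Finset.mul_sum, Finset.sum_sub_distrib,
        Finset.sum_const, Nat.card_Icc]
      have hcard : w + 1 - (n + 1) = n := by omega
      rw [hcard]
      simp only [nsmul_eq_mul]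
      ring
    rw [hsum1, hsum2, hDdef]
    dsimp only
    ring
  -- independence of Z over the subtype
  have hindepZ : iIndepFun
      (fun i : {x // x ∈ Finset.Icc 1 w} => Z i.1) P := by
    have := hindep.comp (fun i : {x // x ∈ Finset.Icc 1 w} =>
        fun x : ℝ => eps i.1 * (x - cc i.1))
      (fun i => (measurable_id.sub_const _).const_mul _)
    exact this
  -- mgf bound for Y
  have hmgfprod : mgf Y P t = ∏ i : {x // x ∈ Finset.Icc 1 w}, mgf (Z i.1) P t := by
    have hsum : Y = ∑ i : {x // x ∈ Finset.Icc 1 w},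
        (fun ω => Z i.1 ω) := by
      funext ω
      rw [hYdef]
      dsimp only
      rw [Finset.sum_apply]
      exact (Finset.sum_coe_sort (Finset.Icc 1 w) (fun i => Z i ω)).symm
    rw [hsum]
    exact hindepZ.mgf_sum (fun i => hZmeas i.1 i.2) Finset.univ
  have hmgfY : mgf Y P t ≤ Real.exp ((w : ℝ) * (3/16 * t ^ 2)) := by
    rw [hmgfprod]
    have hcard : (Finset.univ : Finset {x // x ∈ Finset.Icc 1 w}).card = w := by
      rw [Finset.card_univ, Fintype.card_coe, Nat.card_Icc]; omega
    calc ∏ i : {x // x ∈ Finset.Icc 1 w}, mgf (Z i.1) P t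
        ≤ ∏ _i : {x // x ∈ Finset.Icc 1 w}, Real.exp (3/16 * t ^ 2) := by
          refine Finset.prod_le_prod (fun i _ => mgf_nonneg) (fun i _ => ?_)
          exact my_mgf_bound P (Z i.1) (hZmeas i.1 i.2) (hZbound i.1 i.2)
            (hZmean i.1 i.2) (hZvar i.1 i.2) ht0 ht1
      _ = Real.exp ((w : ℝ) * (3/16 * t ^ 2)) := by
          rw [Finset.prod_const, hcard, ← Real.exp_nat_mul]
  -- integrability of exp(t Y)
  have hYb : ∀ᵐ ω ∂P, |Y ω| ≤ (w : ℝ) := by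
    have h := (Filter.eventually_all_finset (Finset.Icc 1 w)).mpr hZbound
    filter_upwards [h] with ω hω
    calc |Y ω| = |∑ i ∈ Finset.Icc 1 w, Z i ω| := by rw [hYdef]
    _ ≤ ∑ i ∈ Finset.Icc 1 w, |Z i ω| := Finset.abs_sum_le_sum_abs _ _
    _ ≤ ∑ _i ∈ Finset.Icc 1 w, (1 : ℝ) := Finset.sum_le_sum hω
    _ = (w : ℝ) := by rw [Finset.sum_const, Nat.card_Icc]; simp
  have hYmeas : Measurable Y := by
    rw [hYdef]
    exact Finset.measurable_sum _ hZmeas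
  have hYint : Integrable (fun ω => Real.exp (t * Y ω)) P := by
    refine my_integrable_of_bound P ((hYmeas.const_mul t).exp.aestronglyMeasurable)
      (Real.exp (t * w)) ?_
    filter_upwards [hYb] with ω hω
    rw [abs_of_pos (Real.exp_pos _)]
    apply Real.exp_le_exp.mpr
    calc t * Y ω ≤ |t * Y ω| := le_abs_self _
    _ = t * |Y ω| := by rw [abs_mul, abs_of_nonneg ht0]
    _ ≤ t * w := mul_le_mul_of_nonneg_left hω ht0
  -- Chernoff bound
  have hcher := measure_ge_le_exp_mul_mgf (μ := P) (X := Y) ε ht0 hYint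
  have hexp_le : Real.exp (-t * ε) * mgf Y P t ≤ 1 / (T : ℝ) := by
    have h1 : Real.exp (-t * ε) * mgf Y P t
        ≤ Real.exp (-t * ε) * Real.exp ((w : ℝ) * (3/16 * t ^ 2)) := by
      exact mul_le_mul_of_nonneg_left hmgfY (Real.exp_pos _).le
    rw [← Real.exp_add] at h1
    have hexpval : -t * ε + (w : ℝ) * (3/16 * t ^ 2) = -(5/8) * ε ^ 2 / N := by
      rw [htdef, hwN]
      field_simp
      ring
    rw [hexpval] at h1
    have hlogT : Real.log (2 * T) = Real.log 2 + Real.log T := by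
      rw [Real.log_mul (by norm_num) (by positivity)]
    have hexponent : -(5/8) * ε ^ 2 / N ≤ -Real.log T := by
      rw [div_le_iff₀ hNpos]
      have hlog2 : 0 < Real.log 2 := Real.log_pos (by norm_num)
      have hlogT0 : 0 ≤ Real.log T := Real.log_nonneg hT1
      have hkey : N * Real.log T ≤ 5 / 8 * ε ^ 2 := by
        refine aux_exponent hNpos ?_ hlog2 hlogT0
        rw [← hlogT, ← hC2]
        exact hε2
      linarith [hkey]
    have h2 : Real.exp (-(5/8) * ε ^ 2 / N) ≤ Real.exp (-Real.log T) :=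
      Real.exp_le_exp.mpr hexponent
    have h3 : Real.exp (-Real.log T) = 1 / (T : ℝ) := by
      rw [Real.exp_neg, Real.exp_log (by positivity)]
      rw [one_div]
    linarith
  have hTail : P {ω | ε ≤ Y ω} ≤ ENNReal.ofReal (1 / (T : ℝ)) := by
    rw [ENNReal.le_ofReal_iff_toReal_le (measure_ne_top _ _) (by positivity)]
    exact le_trans hcher hexp_le
  -- event inclusion
  set A : Set Ω := {ω | b < |D ω|} with hAdef
  have hAmeas : MeasurableSet A := by
    have hDmeas : Measurable D := by
      rw [hDdef]
      exact (Finset.measurable_sum _ (fun i hi => hmeas i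
        (by simp only [Finset.mem_Icc] at hi ⊢; omega))).sub
        (Finset.measurable_sum _ (fun i hi => hmeas i
        (by simp only [Finset.mem_Icc] at hi ⊢; omega)))
    exact measurableSet_lt measurable_const hDmeas.abs
  have hincl : Aᶜ ⊆ {ω | ε ≤ Y ω} := by
    intro ω hω
    simp only [hAdef, Set.mem_compl_iff, Set.mem_setOf_eq, not_lt] at hω
    simp only [Set.mem_setOf_eq]
    rw [hYeq ω]
    have h1 : N * δ ≤ s * (N * (μ' - μ)) := by
      have heq : s * (N * (μ' - μ)) = N * (s * (μ' - μ)) := by ring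
      rw [heq, hs_mul]
      exact mul_le_mul_of_nonneg_left hgap hNpos.le
    have h2 : s * D ω ≤ b := by
      calc s * D ω ≤ |s * D ω| := le_abs_self _
      _ = |D ω| := by rw [abs_mul, hs_abs, one_mul]
      _ ≤ b := hω
    rw [hεdef]
    linarith
  have hAc : P Aᶜ ≤ ENNReal.ofReal (1 / (T : ℝ)) :=
    le_trans (measure_mono hincl) hTail
  -- conclude
  have hPA : P A = 1 - P Aᶜ := by
    have h := prob_compl_eq_one_sub (μ := P) hAmeas.compl
    rwa [compl_compl] at h
  have hfinal : ENNReal.ofReal (1 - 1 / (T : ℝ)) ≤ P A := by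
    rw [hPA]
    calc ENNReal.ofReal (1 - 1 / (T : ℝ))
        = 1 - ENNReal.ofReal (1 / (T : ℝ)) := by
          rw [ENNReal.ofReal_sub _ (by positivity), ENNReal.ofReal_one]
      _ ≤ 1 - P Aᶜ := tsub_le_tsub_left hAc 1
  exact hfinal
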